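/- Let A be a Banach algebra, B a right Banach A-module with action π_r : B × A → B, and suppose e'' ∈ A** is a right unit for the first Arens product on A** which is the weak* limit of a bounded approximate identity (e_α) of A. Then B = BA (every b ∈ B can be written as b = π_r(x,a) with x ∈ B, a ∈ A) if and only if e'' is a right unit A**-module for B**, i.e. π_r***(b'', e'') = b'' for every b'' ∈ B**. -/

import Mathlib

set_option linter.unusedSectionVars false
set_option maxHeartbeats 1600000


open Filter Topology ContinuousLinearMap NormedSpace

noncomputable section

variable {X Y Z W E F : Type*}
  [NormedAddCommGroup X] [NormedSpace ℂ X]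
  [NormedAddCommGroup Y] [NormedSpace ℂ Y]
  [NormedAddCommGroup Z] [NormedSpace ℂ Z]
  [NormedAddCommGroup E] [NormedSpace ℂ E]
  [NormedAddCommGroup F] [NormedSpace ℂ F]

/-- Port shim: shortcut instances so that nested instance search finds the structure of
`StrongDual ℂ (StrongDual ℂ E)` (formerly `NormedSpace.Dual`); it is `inferInstance`. -/
instance instNACGStrongDualC {E : Type*} [NormedAddCommGroup E] [NormedSpace ℂ E] :
    NormedAddCommGroup (StrongDual ℂ E) := inferInstance

instance instNSStrongDualC {E : Type*} [NormedAddCommGroup E] [NormedSpace ℂ E] :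
    NormedSpace ℂ (StrongDual ℂ E) := inferInstance

/-- The (first) Arens adjoint `m* : Z* × X → Y*` of a bounded bilinear map
`m : X × Y → Z`, characterized by `⟨m*(z',x), y⟩ = ⟨z', m(x,y)⟩`. -/
noncomputable def arensAdj (m : X →L[ℂ] Y →L[ℂ] Z) :
    StrongDual ℂ Z →L[ℂ] X →L[ℂ] StrongDual ℂ Y :=
  ((ContinuousLinearMap.compL ℂ Y Z ℂ).flip.comp m).flip

/-- The Arens triple adjoint `m*** : X** × Y** → Z**`. -/
noncomputable def arensExt (m : X →L[ℂ] Y →L[ℂ] Z) :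
    StrongDual ℂ (StrongDual ℂ X) →L[ℂ] StrongDual ℂ (StrongDual ℂ Y) →L[ℂ] StrongDual ℂ (StrongDual ℂ Z) :=
  arensAdj (arensAdj (arensAdj m))

/-- A map between dual spaces is weak*-weak* continuous. -/
def IsWeakStarCont (f : StrongDual ℂ E → StrongDual ℂ F) : Prop :=
  Continuous fun x : WeakDual ℂ E =>
    StrongDual.toWeakDual (f (WeakDual.toStrongDual x))

/-- First topological center of a bounded bilinear map. -/
def arensZ1 (m : X →L[ℂ] Y →L[ℂ] Z) : Set (StrongDual ℂ (StrongDual ℂ X)) :=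
  {x'' | IsWeakStarCont fun y'' => arensExt m x'' y''}

/-- Second topological center of a bounded bilinear map. -/
def arensZ2 (m : X →L[ℂ] Y →L[ℂ] Z) : Set (StrongDual ℂ (StrongDual ℂ Y)) :=
  {y'' | IsWeakStarCont fun x'' => arensExt m.flip y'' x''}

/-- `m` is Arens regular when `m*** = m^{t***t}`. -/
def ArensRegular (m : X →L[ℂ] Y →L[ℂ] Z) : Prop :=
  arensExt m = (arensExt m.flip).flip

/-- `m` is left strongly Arens irregular when `Z₁(m)` is the canonical image of `X`. -/
def LeftStronglyArensIrregular (m : X →L[ℂ] Y →L[ℂ] Z) : Prop :=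
  arensZ1 m = Set.range (NormedSpace.inclusionInDoubleDual ℂ X)

/-- `m` is right strongly Arens irregular when `Z₂(m)` is the canonical image of `Y`. -/
def RightStronglyArensIrregular (m : X →L[ℂ] Y →L[ℂ] Z) : Prop :=
  arensZ2 m = Set.range (NormedSpace.inclusionInDoubleDual ℂ Y)

/-- The adjoint `T* : F* → E*` of a bounded linear map. -/
noncomputable def dualMap' (T : E →L[ℂ] F) : StrongDual ℂ F →L[ℂ] StrongDual ℂ E :=
  (ContinuousLinearMap.compL ℂ E F ℂ).flip T

/-- The second adjoint `T** : E** → F**` of a bounded linear map. -/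
noncomputable def bidualMap (T : E →L[ℂ] F) :
    StrongDual ℂ (StrongDual ℂ E) →L[ℂ] StrongDual ℂ (StrongDual ℂ F) :=
  dualMap' (dualMap' T)

/-- A net in `A`: a function from a nonempty directed preorder to `A`. -/
structure Net (A : Type*) where
  ι : Type
  [pre : Preorder ι]
  [dir : IsDirected ι (· ≤ ·)]
  [ne : Nonempty ι]
  e : ι → A

attribute [instance] Net.pre Net.dir Net.ne

/-- A bounded approximate identity for a (non-unital) Banach algebra. -/
def IsBAI {A : Type*} [NonUnitalNormedRing A] (N : Net A) : Prop :=
  (∃ C : ℝ, ∀ i, ‖N.e i‖ ≤ C) ∧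
  (∀ a : A, Tendsto (fun i => N.e i * a) atTop (𝓝 a)) ∧
  (∀ a : A, Tendsto (fun i => a * N.e i) atTop (𝓝 a))

end

namespace Stmt13Aux
open Unitization

variable {A B : Type*} [NonUnitalNormedRing A] [NormedSpace ℂ A]
  [IsScalarTower ℂ A A] [SMulCommClass ℂ A A]
  [NormedAddCommGroup B] [NormedSpace ℂ B]

local notation "𝓤" => WithLp 1 (Unitization ℂ A)

noncomputable def ufst (u : WithLp 1 (Unitization ℂ A)) : ℂ :=
  (WithLp.equiv 1 (Unitization ℂ A) u).fst
noncomputable def usnd (u : WithLp 1 (Unitization ℂ A)) : A :=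
  (WithLp.equiv 1 (Unitization ℂ A) u).snd
noncomputable def uinr (a : A) : WithLp 1 (Unitization ℂ A) :=
  (WithLp.equiv 1 (Unitization ℂ A)).symm (a : Unitization ℂ A)

lemma ufst_one : ufst (1 : 𝓤) = 1 := rfl
lemma usnd_one : usnd (1 : 𝓤) = 0 := rfl
lemma ufst_mul (u v : 𝓤) : ufst (u * v) = ufst u * ufst v := Unitization.fst_mul _ _
lemma usnd_mul (u v : 𝓤) : usnd (u * v) =
    ufst u • usnd v + ufst v • usnd u + usnd u * usnd v := Unitization.snd_mul _ _
lemma ufst_add (u v : 𝓤) : ufst (u + v) = ufst u + ufst v := rfl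
lemma usnd_add (u v : 𝓤) : usnd (u + v) = usnd u + usnd v := rfl
lemma ufst_sub (u v : 𝓤) : ufst (u - v) = ufst u - ufst v := rfl
lemma usnd_sub (u v : 𝓤) : usnd (u - v) = usnd u - usnd v := rfl
lemma ufst_smul (s : ℂ) (u : 𝓤) : ufst (s • u) = s * ufst u := rfl
lemma usnd_smul (s : ℂ) (u : 𝓤) : usnd (s • u) = s • usnd u := rfl
lemma ufst_uinr (a : A) : ufst (uinr a : 𝓤) = 0 := rfl
lemma usnd_uinr (a : A) : usnd (uinr a : 𝓤) = a := rfl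
lemma unorm_def (u : 𝓤) : ‖u‖ = ‖ufst u‖ + ‖usnd u‖ := WithLp.unitization_norm_def u
lemma ufst_norm_le (u : 𝓤) : ‖ufst u‖ ≤ ‖u‖ := by
  rw [unorm_def]; linarith [norm_nonneg (usnd u)]

lemma unorm_one : ‖(1 : 𝓤)‖ = 1 := by
  rw [unorm_def, ufst_one, usnd_one]; simp

lemma ufst_inv_unit (u : 𝓤ˣ) : ufst (↑u⁻¹ : 𝓤) = (ufst (↑u : 𝓤))⁻¹ := by
  have h : ufst (↑u⁻¹ : 𝓤) * ufst (↑u : 𝓤) = 1 := by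
    rw [← ufst_mul, u.inv_mul, ufst_one]
  exact eq_inv_of_mul_eq_one_left h

variable (πr : B →L[ℂ] A →L[ℂ] B)

noncomputable def uact (x : B) (u : WithLp 1 (Unitization ℂ A)) : B :=
  ufst u • x + πr x (usnd u)

lemma uact_one (x : B) : uact πr x 1 = x := by
  simp [uact, ufst_one, usnd_one]

lemma uact_uinr (x : B) (a : A) : uact πr x (uinr a) = πr x a := by
  simp [uact, ufst_uinr, usnd_uinr]

lemma uact_sub_right (x : B) (u v : 𝓤) : uact πr x (u - v) = uact πr x u - uact πr x v := by
  simp only [uact, ufst_sub, usnd_sub, sub_smul, map_sub]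
  abel

lemma uact_smul_right (x : B) (s : ℂ) (u : 𝓤) : uact πr x (s • u) = s • uact πr x u := by
  simp only [uact, ufst_smul, usnd_smul, map_smul, smul_add, smul_smul]

lemma uact_sub_left (x y : B) (u : 𝓤) : uact πr (x - y) u = uact πr x u - uact πr y u := by
  simp only [uact, smul_sub, map_sub]
  rw [ContinuousLinearMap.sub_apply]
  abel

lemma uact_neg_right (x : B) (u : 𝓤) : uact πr x (-u) = -uact πr x u := by
  have : -u = (0 : 𝓤) - u := by abel
  rw [this, uact_sub_right]
  simp [uact, ufst, usnd]

lemma uact_mul (hmod : ∀ (b : B) (a₁ a₂ : A), πr (πr b a₁) a₂ = πr b (a₁ * a₂))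
    (x : B) (u v : 𝓤) : uact πr x (u * v) = uact πr (uact πr x u) v := by
  simp only [uact, ufst_mul, usnd_mul, map_add, map_smul, ContinuousLinearMap.add_apply,
    ContinuousLinearMap.smul_apply, smul_add, smul_smul, hmod]
  rw [mul_comm (ufst v) (ufst u)]
  abel

lemma uact_norm_le (x : B) (u : 𝓤) : ‖uact πr x u‖ ≤ (max ‖πr‖ 1) * ‖x‖ * ‖u‖ := by
  have h1 : ‖uact πr x u‖ ≤ ‖ufst u‖ * ‖x‖ + ‖πr‖ * ‖x‖ * ‖usnd u‖ := by
    refine (norm_add_le _ _).trans ?_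
    gcongr
    · exact (norm_smul _ _).le
    · exact (πr x).le_opNorm _ |>.trans (by
        have := πr.le_opNorm x
        nlinarith [norm_nonneg (usnd u), norm_nonneg x,
          norm_nonneg (πr x), norm_nonneg πr])
  rw [unorm_def]
  have h2 : (1:ℝ) ≤ max ‖πr‖ 1 := le_max_right _ _
  have h3 : ‖πr‖ ≤ max ‖πr‖ 1 := le_max_left _ _
  have hx : (0:ℝ) ≤ ‖x‖ := norm_nonneg x
  have hf0 : (0:ℝ) ≤ ‖ufst u‖ := norm_nonneg _
  have hs0 : (0:ℝ) ≤ ‖usnd u‖ := norm_nonneg _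
  nlinarith [mul_nonneg (mul_nonneg (sub_nonneg.2 h2) hx) hf0,
    mul_nonneg (mul_nonneg (sub_nonneg.2 h3) hx) hs0]

lemma cohen_key [CompleteSpace A]
    (hmod : ∀ (b : B) (a₁ a₂ : A), πr (πr b a₁) a₂ = πr b (a₁ * a₂))
    {C t : ℝ} (hC0 : 0 ≤ C) (ht0 : 0 < t) (ht : t * (1 + C) ≤ 1/2)
    (N : Net A) (hC : ∀ i, ‖N.e i‖ ≤ C)
    (hl : ∀ a : A, Tendsto (fun i => N.e i * a) atTop (𝓝 a))
    (b : B)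
    (hball : ∀ z : WithLp 1 (Unitization ℂ A),
      Tendsto (fun i => πr (uact πr b z) (N.e i)) atTop (𝓝 (uact πr b z)))
    (n : ℕ) (u : (WithLp 1 (Unitization ℂ A))ˣ)
    (hu : ufst (↑u : 𝓤) = (((1 - t : ℝ)) : ℂ) ^ n) :
    ∃ u' : (WithLp 1 (Unitization ℂ A))ˣ,
      ufst (↑u' : 𝓤) = (((1 - t : ℝ)) : ℂ) ^ (n+1) ∧
      ‖(↑u' : 𝓤) - (↑u : 𝓤)‖ ≤ (1 + C) * t * (1-t)^n ∧
      ‖uact πr b ↑(u'⁻¹) - uact πr b ↑(u⁻¹)‖ ≤ (1/2) ^ n := by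
  have ht1 : t ≤ 1/2 := by nlinarith
  have h1t : 0 < 1 - t := by linarith
  have h1t1 : 1 - t ≤ 1 := by linarith
  set c : ℂ := (((1 - t : ℝ)) : ℂ) with hc
  have hcn : ‖c‖ = 1 - t := by
    rw [hc, Complex.norm_real, Real.norm_eq_abs, abs_of_pos h1t]
  have hc0 : c ≠ 0 := by
    intro h; rw [h] at hcn; simp at hcn; linarith
  have hpow_pos : ∀ m : ℕ, (0:ℝ) < (1-t)^m := fun m => pow_pos h1t m
  have hpow_le1 : ∀ m : ℕ, (1-t)^m ≤ 1 := fun m => pow_le_one₀ (le_of_lt h1t) h1t1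
  set M : ℝ := max ‖πr‖ 1 with hM
  have hM1 : (1:ℝ) ≤ M := le_max_right _ _
  have hM0 : (0:ℝ) < M := lt_of_lt_of_le one_pos hM1
  set z : 𝓤 := ↑u⁻¹ with hzdef
  have hz : ufst z = (c ^ n)⁻¹ := by rw [hzdef, ufst_inv_unit, hu]
  have hznorm : ‖ufst z‖ = ((1-t)^n)⁻¹ := by
    rw [hz, norm_inv, norm_pow, hcn]
  set x : B := uact πr b z with hxdef
  set D : ℝ := 4*M^2*t*(1-t)^n*(‖z‖+1) + 1 with hD
  have hD0 : (0:ℝ) < D := by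
    have : (0:ℝ) ≤ 4*M^2*t*(1-t)^n*(‖z‖+1) := by positivity
    linarith
  set δ : ℝ := min (1/4) ((1/2)^n / D) with hδ
  have hδ0 : (0:ℝ) < δ := by
    apply lt_min (by norm_num)
    positivity
  have hδ4 : δ ≤ 1/4 := min_le_left _ _
  have hδD : δ ≤ (1/2)^n / D := min_le_right _ _
  -- choose the index
  have ev₁ : ∀ᶠ i in atTop, ‖N.e i * usnd z - usnd z‖ < δ := by
    have := Metric.tendsto_nhds.mp (hl (usnd z)) δ hδ0
    filter_upwards [this] with i hi
    rwa [dist_eq_norm] at hi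
  have ev₂ : ∀ᶠ i in atTop, ‖πr x (N.e i) - x‖ < δ := by
    have := Metric.tendsto_nhds.mp (hball z) δ hδ0
    filter_upwards [this] with i hi
    rwa [dist_eq_norm] at hi
  obtain ⟨i, hi1, hi2⟩ := (ev₁.and ev₂).exists
  set e : A := N.e i with he
  set E : 𝓤 := uinr e with hE
  set d : 𝓤 := E - 1 with hd
  have hfd : ufst d = -1 := by rw [hd, ufst_sub, ufst_uinr, ufst_one]; ring
  have hsd : usnd d = e := by rw [hd, usnd_sub, usnd_uinr, usnd_one, sub_zero]
  have hdnorm : ‖d‖ ≤ 1 + C := by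
    rw [unorm_def, hfd, hsd]
    simp only [norm_neg, norm_one]
    have := hC i
    linarith
  set s : ℂ := ((t*(1-t)^n : ℝ) : ℂ) with hs
  have hsnorm : ‖s‖ = t * (1-t)^n := by
    rw [hs, Complex.norm_real, Real.norm_eq_abs, abs_of_pos (by positivity)]
  set v : 𝓤 := s • (d * z) with hv
  -- bound on ‖d * z‖
  have hdz : ‖d * z‖ ≤ ((1-t)^n)⁻¹ * (1 + C) + δ := by
    rw [unorm_def, ufst_mul, usnd_mul, hfd, hsd]
    have h1 : ‖(-1 : ℂ) * ufst z‖ = ((1-t)^n)⁻¹ := by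
      rw [norm_mul, norm_neg, norm_one, one_mul, hznorm]
    have h2 : ‖(-1 : ℂ) • usnd z + ufst z • e + e * usnd z‖ ≤ ((1-t)^n)⁻¹ * C + δ := by
      have : (-1 : ℂ) • usnd z + ufst z • e + e * usnd z
          = ufst z • e + (e * usnd z - usnd z) := by
        rw [neg_one_smul]; abel
      rw [this]
      refine (norm_add_le _ _).trans ?_
      have hb1 : ‖ufst z • e‖ ≤ ((1-t)^n)⁻¹ * C := by
        rw [norm_smul, hznorm]
        have h3 : (0:ℝ) ≤ ((1-t)^n)⁻¹ := by positivity
        exact mul_le_mul_of_nonneg_left (hC i) h3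
      linarith [le_of_lt hi1]
    linarith
  have hvnorm : ‖v‖ ≤ 3/4 := by
    rw [hv, norm_smul, hsnorm]
    have h4 : t * (1-t)^n * ‖d * z‖ ≤ t * (1-t)^n * (((1-t)^n)⁻¹ * (1 + C) + δ) := by
      apply mul_le_mul_of_nonneg_left hdz (by positivity)
    have h5 : t * (1-t)^n * (((1-t)^n)⁻¹ * (1 + C) + δ)
        = t * (1+C) + t * (1-t)^n * δ := by
      field_simp
    have h6 : t * (1-t)^n * δ ≤ 1/4 := by
      have h7 : t * (1-t)^n ≤ 1 := by nlinarith [hpow_le1 n]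
      nlinarith
    linarith
  have hv1 : ‖-v‖ < 1 := by rw [norm_neg]; linarith
  set w : (WithLp 1 (Unitization ℂ A))ˣ := Units.oneSub (-v) hv1 with hw
  have hwval : (↑w : 𝓤) = 1 + v := by
    show (1 : 𝓤) - (-v) = 1 + v
    rw [sub_neg_eq_add]
  -- inverse identity
  have hwinveq : (↑w⁻¹ : 𝓤) + v * (↑w⁻¹ : 𝓤) = 1 := by
    have := w.mul_inv
    rw [hwval] at this
    calc (↑w⁻¹ : 𝓤) + v * ↑w⁻¹ = (1 + v) * ↑w⁻¹ := by rw [add_mul, one_mul]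
    _ = 1 := this
  have hwinv_sub : (↑w⁻¹ : 𝓤) - 1 = -(v * (↑w⁻¹ : 𝓤)) := by
    rw [← hwinveq]; abel
  have hwinv_norm : ‖(↑w⁻¹ : 𝓤)‖ ≤ 4 := by
    have h8 : (↑w⁻¹ : 𝓤) = 1 - v * ↑w⁻¹ := by rw [← hwinveq]; abel
    have h9 : ‖(↑w⁻¹ : 𝓤)‖ ≤ 1 + ‖v‖ * ‖(↑w⁻¹ : 𝓤)‖ := by
      calc ‖(↑w⁻¹ : 𝓤)‖ = ‖(1 : 𝓤) - v * ↑w⁻¹‖ := by rw [← h8]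
      _ ≤ ‖(1:𝓤)‖ + ‖v * (↑w⁻¹:𝓤)‖ := norm_sub_le _ _
      _ ≤ 1 + ‖v‖ * ‖(↑w⁻¹:𝓤)‖ := by
          rw [unorm_one]
          gcongr
          exact norm_mul_le _ _
    nlinarith [norm_nonneg (↑w⁻¹ : 𝓤)]
  refine ⟨w * u, ?_, ?_, ?_⟩
  · -- scalar part
    rw [Units.val_mul, ufst_mul, hwval, ufst_add, ufst_one, hv, ufst_smul, ufst_mul, hfd, hz, hu]
    have hcninv : (c ^ n)⁻¹ * c ^ n = 1 := inv_mul_cancel₀ (pow_ne_zero n hc0)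
    have hsc : s = (t : ℂ) * c ^ n := by
      rw [hs, hc]
      push_cast
      ring
    have hct : c = 1 - (t:ℂ) := by rw [hc]; push_cast; ring
    calc (1 + s * (-1 * (c^n)⁻¹)) * c^n = c^n - s * ((c^n)⁻¹ * c^n) := by ring
    _ = c^n - (t:ℂ) * c^n := by rw [hcninv, hsc]; ring
    _ = c^(n+1) := by rw [hct]; ring
  · -- norm of difference
    have h10 : (↑(w * u) : 𝓤) - ↑u = v * ↑u := by
      rw [Units.val_mul, hwval, add_mul, one_mul]; abel
    rw [h10, hv, smul_mul_assoc]
    have h11 : d * z * ↑u = d := by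
      rw [hzdef, mul_assoc, u.inv_mul, mul_one]
    rw [h11, norm_smul, hsnorm]
    calc t * (1-t)^n * ‖d‖ ≤ t * (1-t)^n * (1+C) := by
          apply mul_le_mul_of_nonneg_left hdnorm (by positivity)
    _ = (1+C) * t * (1-t)^n := by ring
  · -- module difference
    have h12 : (↑(w * u)⁻¹ : 𝓤) = z * ↑w⁻¹ := by
      rw [mul_inv_rev, Units.val_mul, hzdef]
    have h13 : uact πr b ↑(w * u)⁻¹ - uact πr b ↑u⁻¹
        = uact πr x ((↑w⁻¹ : 𝓤) - 1) := by
      rw [h12, uact_mul πr hmod, ← hzdef, ← hxdef, uact_sub_right, uact_one]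
    rw [h13, hwinv_sub, uact_neg_right, hv, smul_mul_assoc, uact_smul_right, norm_neg,
      norm_smul, hsnorm]
    have h14 : uact πr x (d * z * ↑w⁻¹) = uact πr (uact πr (uact πr x d) z) ↑w⁻¹ := by
      rw [uact_mul πr hmod, uact_mul πr hmod]
    have h15 : ‖uact πr x d‖ ≤ δ := by
      have : uact πr x d = πr x e - x := by
        rw [hd, uact_sub_right, uact_one, uact_uinr]
      rw [this]
      exact le_of_lt hi2
    have h16 : ‖uact πr (uact πr x d) z‖ ≤ M * δ * ‖z‖ := by
      calc ‖uact πr (uact πr x d) z‖ ≤ M * ‖uact πr x d‖ * ‖z‖ := uact_norm_le πr _ _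
      _ ≤ M * δ * ‖z‖ := by
          apply mul_le_mul_of_nonneg_right _ (norm_nonneg z)
          exact mul_le_mul_of_nonneg_left h15 (le_of_lt hM0)
    have h17 : ‖uact πr x (d * z * ↑w⁻¹)‖ ≤ M * (M * δ * ‖z‖) * 4 := by
      rw [h14]
      calc ‖uact πr (uact πr (uact πr x d) z) ↑w⁻¹‖
          ≤ M * ‖uact πr (uact πr x d) z‖ * ‖(↑w⁻¹ : 𝓤)‖ := uact_norm_le πr _ _
      _ ≤ M * (M * δ * ‖z‖) * 4 := by
          have hq : (0:ℝ) ≤ M * ‖uact πr (uact πr x d) z‖ := by positivity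
          calc M * ‖uact πr (uact πr x d) z‖ * ‖(↑w⁻¹:𝓤)‖
              ≤ M * ‖uact πr (uact πr x d) z‖ * 4 := by
                apply mul_le_mul_of_nonneg_left hwinv_norm hq
          _ ≤ M * (M * δ * ‖z‖) * 4 := by
                apply mul_le_mul_of_nonneg_right _ (by norm_num)
                exact mul_le_mul_of_nonneg_left h16 (le_of_lt hM0)
    calc t * (1-t)^n * ‖uact πr x (d * z * ↑w⁻¹)‖
        ≤ t * (1-t)^n * (M * (M * δ * ‖z‖) * 4) := by
          apply mul_le_mul_of_nonneg_left h17 (by positivity)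
    _ = (4*M^2*t*(1-t)^n*‖z‖) * δ := by ring
    _ ≤ (4*M^2*t*(1-t)^n*(‖z‖+1) + 1) * ((1/2)^n / D) := by
          apply mul_le_mul _ hδD (le_of_lt hδ0) (le_of_lt hD0)
          have : (0:ℝ) ≤ 4*M^2*t*(1-t)^n := by positivity
          nlinarith
    _ = (1/2)^n := by
          rw [← hD]
          field_simp
  done

theorem cohen_factorization [CompleteSpace A] [CompleteSpace B]
    (hmod : ∀ (b : B) (a₁ a₂ : A), πr (πr b a₁) a₂ = πr b (a₁ * a₂))
    (N : Net A) (hN : IsBAI N) (b : B)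
    (hb : Tendsto (fun i => πr b (N.e i)) atTop (𝓝 b)) :
    ∃ (x : B) (a : A), b = πr x a := by
  obtain ⟨C₀, hC₀⟩ := hN.1
  set C : ℝ := max C₀ 0 with hCdef
  have hC : ∀ i, ‖N.e i‖ ≤ C := fun i => (hC₀ i).trans (le_max_left _ _)
  have hC0 : (0:ℝ) ≤ C := le_max_right _ _
  set t : ℝ := (2*(1+C))⁻¹ with htdef
  have h1C : (0:ℝ) < 1 + C := by linarith
  have ht0 : 0 < t := by positivity
  have ht : t * (1 + C) ≤ 1/2 := by
    rw [htdef]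
    rw [inv_mul_eq_div, div_le_iff₀ (by positivity)]
    ring_nf
    nlinarith
  have ht1 : t ≤ 1/2 := by nlinarith
  have h1t : 0 < 1 - t := by linarith
  set c : ℂ := (((1 - t : ℝ)) : ℂ) with hc
  have hcn : ‖c‖ = 1 - t := by
    rw [hc, Complex.norm_real, Real.norm_eq_abs, abs_of_pos h1t]
  set M : ℝ := max ‖πr‖ 1 with hM
  have hM1 : (1:ℝ) ≤ M := le_max_right _ _
  -- every vector of the form `uact πr b z` is essential
  have hball : ∀ z : WithLp 1 (Unitization ℂ A),
      Tendsto (fun i => πr (uact πr b z) (N.e i)) atTop (𝓝 (uact πr b z)) := by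
    intro z
    have h1 : (fun i => πr (uact πr b z) (N.e i))
        = fun i => ufst z • πr b (N.e i) + πr b (usnd z * N.e i) := by
      funext i
      rw [uact, map_add, ContinuousLinearMap.add_apply, map_smul,
        ContinuousLinearMap.smul_apply, hmod]
    rw [h1]
    have h2 : Tendsto (fun i => πr b (usnd z * N.e i)) atTop (𝓝 (πr b (usnd z))) :=
      ((πr b).continuous.tendsto _).comp (hN.2.2 (usnd z))
    have h3 := (hb.const_smul (ufst z)).add h2
    exact h3
  have key := fun (n : ℕ) (u : (WithLp 1 (Unitization ℂ A))ˣ)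
      (hu : ufst (↑u : WithLp 1 (Unitization ℂ A)) = c ^ n) =>
    cohen_key πr hmod hC0 ht0 ht N hC hN.2.1 b hball n u hu
  -- the recursively constructed sequence of units
  let g : ∀ n : ℕ, {u : (WithLp 1 (Unitization ℂ A))ˣ //
      ufst (↑u : WithLp 1 (Unitization ℂ A)) = c ^ n} := fun n =>
    Nat.rec ⟨1, by rw [Units.val_one, ufst_one, pow_zero]⟩
      (fun n p => ⟨(key n p.1 p.2).choose, (key n p.1 p.2).choose_spec.1⟩) n
  set G : ℕ → WithLp 1 (Unitization ℂ A) := fun n => ↑(g n).1 with hG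
  set X : ℕ → B := fun n => uact πr b ↑((g n).1)⁻¹ with hX
  have hGd : ∀ n, ‖G (n+1) - G n‖ ≤ ((1+C)*t) * (1-t)^n := by
    intro n
    have := (key n (g n).1 (g n).2).choose_spec.2.1
    calc ‖G (n+1) - G n‖ = ‖(↑((key n (g n).1 (g n).2).choose) : WithLp 1 (Unitization ℂ A))
        - ↑(g n).1‖ := rfl
    _ ≤ (1+C) * t * (1-t)^n := this
    _ = ((1+C)*t) * (1-t)^n := by ring
  have hXd : ∀ n, ‖X (n+1) - X n‖ ≤ 1 * (1/2)^n := by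
    intro n
    have := (key n (g n).1 (g n).2).choose_spec.2.2
    calc ‖X (n+1) - X n‖
        = ‖uact πr b ↑((key n (g n).1 (g n).2).choose)⁻¹ - uact πr b ↑((g n).1)⁻¹‖ := rfl
    _ ≤ (1/2)^n := this
    _ = 1 * (1/2)^n := (one_mul _).symm
  have hGc : CauchySeq G := by
    apply cauchySeq_of_le_geometric (1-t) ((1+C)*t) (by linarith)
    intro n
    rw [dist_comm, dist_eq_norm]
    exact hGd n
  have hXc : CauchySeq X := by
    apply cauchySeq_of_le_geometric (1/2 : ℝ) 1 (by norm_num)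
    intro n
    rw [dist_comm, dist_eq_norm]
    exact hXd n
  obtain ⟨abar, habar⟩ := cauchySeq_tendsto_of_complete hGc
  obtain ⟨x, hx⟩ := cauchySeq_tendsto_of_complete hXc
  -- the scalar part of the limit vanishes
  have hfst0 : ufst abar = 0 := by
    have l1 : Tendsto (fun n => ufst (G n) - ufst abar) atTop (𝓝 0) := by
      refine squeeze_zero_norm (fun n => ?_) (tendsto_iff_norm_sub_tendsto_zero.mp habar)
      rw [← ufst_sub]
      exact ufst_norm_le _
    have l1' : Tendsto (fun n => ufst (G n)) atTop (𝓝 (ufst abar)) := by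
      have := l1.add_const (ufst abar)
      simpa using this
    have l2 : Tendsto (fun n => ufst (G n)) atTop (𝓝 0) := by
      have hpow : Tendsto (fun n : ℕ => c ^ n) atTop (𝓝 0) := by
        apply tendsto_pow_atTop_nhds_zero_of_norm_lt_one
        rw [hcn]; linarith
      have : (fun n => ufst (G n)) = fun n => c ^ n := funext fun n => (g n).2
      rw [this]
      exact hpow
    exact tendsto_nhds_unique l1' l2
  set a : A := usnd abar with ha
  have habar_eq : abar = uinr a := by
    have h1 := Unitization.inl_fst_add_inr_snd_eq (WithLp.equiv 1 (Unitization ℂ A) abar)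
    have h2 : (WithLp.equiv 1 (Unitization ℂ A) abar).fst = ufst abar := rfl
    rw [h2, hfst0] at h1
    simp only [Unitization.inl_zero, zero_add] at h1
    have h5 : WithLp.equiv 1 (Unitization ℂ A) abar = (a : Unitization ℂ A) := h1.symm
    have h4 : (WithLp.equiv 1 (Unitization ℂ A)).symm
        ((WithLp.equiv 1 (Unitization ℂ A)) abar) = abar := Equiv.symm_apply_apply _ _
    rw [← h4, h5]
    rfl
  have hbn : ∀ n, b = uact πr (X n) (G n) := by
    intro n
    calc b = uact πr b 1 := (uact_one _ _).symm
    _ = uact πr b (↑((g n).1)⁻¹ * ↑(g n).1) := by rw [(g n).1.inv_mul]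
    _ = uact πr (X n) (G n) := uact_mul πr hmod _ _ _
  have hlimit : Tendsto (fun n => uact πr (X n) (G n)) atTop (𝓝 (uact πr x abar)) := by
    apply tendsto_iff_norm_sub_tendsto_zero.mpr
    refine squeeze_zero_norm
      (a := fun n => M * ‖X n - x‖ * ‖G n‖ + M * ‖x‖ * ‖G n - abar‖) (fun n => ?_) ?_
    · 
      have hdec : uact πr (X n) (G n) - uact πr x abar
          = uact πr (X n - x) (G n) + uact πr x (G n - abar) := by
        rw [uact_sub_left, uact_sub_right]
        abel
      rw [norm_norm, hdec]
      refine (norm_add_le _ _).trans ?_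
      exact add_le_add (uact_norm_le πr _ _) (uact_norm_le πr _ _)
    · have hA : Tendsto (fun n => ‖X n - x‖) atTop (𝓝 0) :=
        tendsto_iff_norm_sub_tendsto_zero.mp hx
      have hB : Tendsto (fun n => ‖G n‖) atTop (𝓝 ‖abar‖) := habar.norm
      have hCt : Tendsto (fun n => ‖G n - abar‖) atTop (𝓝 0) :=
        tendsto_iff_norm_sub_tendsto_zero.mp habar
      have t1 : Tendsto (fun n => M * ‖X n - x‖ * ‖G n‖) atTop (𝓝 (M * 0 * ‖abar‖)) :=
        (hA.const_mul M).mul hB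
      have t2 : Tendsto (fun n => M * ‖x‖ * ‖G n - abar‖) atTop (𝓝 (M * ‖x‖ * 0)) :=
        hCt.const_mul (M * ‖x‖)
      have := t1.add t2
      simpa using this
  have hconst : (fun n => uact πr (X n) (G n)) = fun _ => b :=
    funext fun n => (hbn n).symm
  rw [hconst] at hlimit
  have hfinal : b = uact πr x abar := tendsto_nhds_unique tendsto_const_nhds hlimit
  exact ⟨x, a, by rw [hfinal, habar_eq, uact_uinr]⟩

end Stmt13Aux


namespace Stmt13Aux

lemma mem_closure_of_dual_vanish {B : Type*} [NormedAddCommGroup B] [NormedSpace ℂ B]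
    (S : Submodule ℂ B) (b : B)
    (h : ∀ f : StrongDual ℂ B, (∀ s ∈ S, f s = 0) → f b = 0) :
    b ∈ closure (S : Set B) := by
  by_contra hb
  set S' : Submodule ℂ B := S.topologicalClosure with hS'
  haveI : IsClosed (S' : Set B) := S.isClosed_topologicalClosure
  have hbS' : b ∉ S' := by
    intro hmem
    exact hb (by rwa [← Submodule.topologicalClosure_coe])
  have hq : (Submodule.Quotient.mk b : B ⧸ S') ≠ 0 := by
    simp only [ne_eq, Submodule.Quotient.mk_eq_zero]
    exact hbS'
  obtain ⟨g, hg1, hgb⟩ := exists_dual_vector ℂ _ (norm_ne_zero_iff.mpr hq)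
  let mkC : B →L[ℂ] B ⧸ S' :=
    LinearMap.mkContinuous S'.mkQ 1
      (fun m => by rw [one_mul]; exact Submodule.Quotient.norm_mk_le S' m)
  have hfS : ∀ s ∈ S, (g.comp mkC) s = 0 := by
    intro s hs
    have hos : (Submodule.Quotient.mk s : B ⧸ S') = 0 :=
      (Submodule.Quotient.mk_eq_zero S').mpr (S.le_topologicalClosure hs)
    have : mkC s = 0 := hos
    simp [ContinuousLinearMap.comp_apply, this]
  have hfb := h (g.comp mkC) hfS
  have : g (Submodule.Quotient.mk b) = 0 := hfb
  rw [hgb] at this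
  have hnz : ‖(Submodule.Quotient.mk b : B ⧸ S')‖ ≠ 0 := norm_ne_zero_iff.mpr hq
  exact hnz (Complex.ofReal_eq_zero.mp this)

end Stmt13Aux

/-- If `e'' ∈ A**` is a right unit for the first Arens product which is
the weak* limit of a BAI of `A`, then `B = BA` iff `π_r***(b'',e'') = b''` for all
`b'' ∈ B**`. -/

theorem stmt_13 {A B : Type*} [NonUnitalNormedRing A] [NormedSpace ℂ A] [IsScalarTower ℂ A A] [SMulCommClass ℂ A A] [CompleteSpace A] [NormedAddCommGroup B] [NormedSpace ℂ B] [CompleteSpace B]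
    (πr : B →L[ℂ] A →L[ℂ] B)
    (hmod : ∀ (b : B) (a₁ a₂ : A), πr (πr b a₁) a₂ = πr b (a₁ * a₂))
    (e'' : StrongDual ℂ (StrongDual ℂ A))
    (hunit : ∀ a'' : StrongDual ℂ (StrongDual ℂ A), arensExt (ContinuousLinearMap.mul ℂ A) a'' e'' = a'')
    (N : Net A) (hN : IsBAI N)
    (hlim : ∀ a' : StrongDual ℂ A, Tendsto (fun i => a' (N.e i)) atTop (𝓝 (e'' a'))) :
    (∀ b : B, ∃ (x : B) (a : A), b = πr x a) ↔
      (∀ b'' : StrongDual ℂ (StrongDual ℂ B), arensExt πr b'' e'' = b'') := by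
  constructor
  · -- factorization implies right unit module
    intro hBA b''
    apply ContinuousLinearMap.ext
    intro b'
    have hkey : arensAdj (arensAdj πr) e'' b' = b' := by
      apply ContinuousLinearMap.ext
      intro b
      obtain ⟨x, a, hxa⟩ := hBA b
      have hb : Tendsto (fun i => πr b (N.e i)) atTop (𝓝 b) := by
        have h2 : (fun i => πr b (N.e i)) = fun i => πr x (a * N.e i) := by
          funext i; rw [hxa, hmod]
        rw [h2, hxa]
        exact ((πr x).continuous.tendsto _).comp (hN.2.2 a)
      have h3 : (arensAdj (arensAdj πr) e'' b') b = e'' (arensAdj πr b' b) := rfl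
      rw [h3]
      have h4 := hlim (arensAdj πr b' b)
      have h5 : (fun i => (arensAdj πr b' b) (N.e i)) = fun i => b' (πr b (N.e i)) := rfl
      rw [h5] at h4
      have h6 : Tendsto (fun i => b' (πr b (N.e i))) atTop (𝓝 (b' b)) :=
        (b'.continuous.tendsto b).comp hb
      exact tendsto_nhds_unique h4 h6
    have h7 : arensExt πr b'' e'' b' = b'' (arensAdj (arensAdj πr) e'' b') := rfl
    rw [h7, hkey]
  · -- right unit module implies factorization
    intro hB'' b
    have hweak : ∀ b' : StrongDual ℂ B, Tendsto (fun i => b' (πr b (N.e i))) atTop (𝓝 (b' b)) := by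
      intro b'
      have h4 := hlim (arensAdj πr b' b)
      have h5 : (fun i => (arensAdj πr b' b) (N.e i)) = fun i => b' (πr b (N.e i)) := rfl
      rw [h5] at h4
      have h6 : e'' (arensAdj πr b' b)
          = arensExt πr (inclusionInDoubleDual ℂ B b) e'' b' := rfl
      rw [h6, hB'' (inclusionInDoubleDual ℂ B b)] at h4
      exact h4
    set S : Submodule ℂ B := LinearMap.range (πr b : A →ₗ[ℂ] B) with hS
    have hmem : b ∈ closure (S : Set B) := by
      apply Stmt13Aux.mem_closure_of_dual_vanish
      intro f hf
      have h7 : ∀ i, f (πr b (N.e i)) = 0 := fun i => hf _ ⟨N.e i, rfl⟩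
      have h8 := hweak f
      have h9 : (fun i => f (πr b (N.e i))) = fun _ => (0:ℂ) := funext h7
      rw [h9] at h8
      exact tendsto_nhds_unique h8 tendsto_const_nhds
    have hb : Tendsto (fun i => πr b (N.e i)) atTop (𝓝 b) := by
      obtain ⟨C₀, hC₀⟩ := hN.1
      set C : ℝ := max C₀ 0 with hCdef
      have hC : ∀ i, ‖N.e i‖ ≤ C := fun i => (hC₀ i).trans (le_max_left _ _)
      have hC0 : (0:ℝ) ≤ C := le_max_right _ _
      rw [Metric.tendsto_nhds]
      intro ε hε
      have hden : (0:ℝ) < ‖πr‖ * C + 2 := by positivity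
      set δ : ℝ := ε / (‖πr‖ * C + 2) with hδdef
      have hδ0 : 0 < δ := by positivity
      obtain ⟨y, hyS, hyd⟩ := Metric.mem_closure_iff.mp hmem δ hδ0
      obtain ⟨a, ha⟩ := hyS
      have htd : Tendsto (fun i => πr y (N.e i)) atTop (𝓝 y) := by
        have h2 : (fun i => πr y (N.e i)) = fun i => πr b (a * N.e i) := by
          funext i; rw [← ha, ContinuousLinearMap.coe_coe, hmod]
        rw [h2, ← ha]
        exact ((πr b).continuous.tendsto _).comp (hN.2.2 a)
      have h10 := Metric.tendsto_nhds.mp htd δ hδ0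
      filter_upwards [h10] with i hi
      have htri : dist (πr b (N.e i)) b ≤ dist (πr b (N.e i)) (πr y (N.e i))
          + dist (πr y (N.e i)) y + dist y b := dist_triangle4 _ _ _ _
      have hb1 : dist (πr b (N.e i)) (πr y (N.e i)) ≤ ‖πr‖ * δ * C := by
        have h11 : πr b (N.e i) - πr y (N.e i) = πr (b - y) (N.e i) := by
          rw [map_sub, ContinuousLinearMap.sub_apply]
        rw [dist_eq_norm, h11]
        calc ‖πr (b - y) (N.e i)‖ ≤ ‖πr‖ * ‖b - y‖ * ‖N.e i‖ := πr.le_opNorm₂ _ _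
        _ ≤ ‖πr‖ * δ * C := by
            have hby : ‖b - y‖ ≤ δ := by
              rw [← dist_eq_norm]
              exact le_of_lt hyd
            gcongr <;> first | exact hby | exact hC i
      have hb2 : dist y b < δ := by rw [dist_comm]; exact hyd
      have hsum : ‖πr‖ * δ * C + δ + δ ≤ ε := by
        have heq : (‖πr‖ * C + 2) * δ = ε := by
          rw [hδdef]; field_simp
        nlinarith [heq]
      calc dist (πr b (N.e i)) b ≤ dist (πr b (N.e i)) (πr y (N.e i))
          + dist (πr y (N.e i)) y + dist y b := htri
      _ < ‖πr‖ * δ * C + δ + δ := by linarith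
      _ ≤ ε := hsum
    obtain ⟨x, a, hfact⟩ := Stmt13Aux.cohen_factorization πr hmod N hN b hb
    exact ⟨x, a, hfact⟩
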